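/- In a braced ladder (a ladder graph in which every 4-cycle has one diagonal added), all edges belong to a single △-connected component; consequently every braced ladder is monochromatic in every NAC-coloring of any graph containing it as a subgraph. -/

import Mathlib

open SimpleGraph

def IsNACColoring {V : Type*} (G : SimpleGraph V) (δ : Sym2 V → Bool) : Prop :=
  (∃ e ∈ G.edgeSet, δ e = true) ∧ (∃ e ∈ G.edgeSet, δ e = false) ∧
  ∀ ⦃u : V⦄ (w : G.Walk u u), w.IsCycle →
    ∀ b : Bool, (w.edges.countP fun e => δ e == b) ≠ 1

/-- Two edges are △-related iff some triangle of `G` contains both. -/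
def triRel {V : Type*} (G : SimpleGraph V) (e₁ e₂ : Sym2 V) : Prop :=
  ∃ a b c : V, G.Adj a b ∧ G.Adj b c ∧ G.Adj c a ∧
    (e₁ = s(a, b) ∨ e₁ = s(b, c) ∨ e₁ = s(c, a)) ∧
    (e₂ = s(a, b) ∨ e₂ = s(b, c) ∨ e₂ = s(c, a))

/-- The braced ladder with columns `0, …, n`: rungs `(i,false)(i,true)`, rails
`(i,b)(i+1,b)` and, in each 4-cycle, one diagonal whose direction is given by `d i`. -/
def bracedLadder (n : ℕ) (d : ℕ → Bool) : SimpleGraph (ℕ × Bool) :=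
  SimpleGraph.fromEdgeSet
    ({e | ∃ i ≤ n, e = s((i, false), (i, true))} ∪
      {e | ∃ i < n, ∃ b : Bool, e = s((i, b), (i + 1, b))} ∪
      {e | ∃ i < n,
        e = if d i then s((i, false), (i + 1, true)) else s((i, true), (i + 1, false))})


section Helpers
open SimpleGraph

lemma tri_mono {W : Type*} (H : SimpleGraph W) (δ : Sym2 W → Bool)
    (hNAC : IsNACColoring H δ) {x y z : W}
    (hxy : H.Adj x y) (hyz : H.Adj y z) (hzx : H.Adj z x) :
    δ s(x, y) = δ s(y, z) ∧ δ s(y, z) = δ s(z, x) := by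
  let w : H.Walk x x := .cons hxy (.cons hyz (.cons hzx .nil))
  have hcyc : w.IsCycle := by
    rw [SimpleGraph.Walk.isCycle_def, SimpleGraph.Walk.isTrail_def]
    refine ⟨?_, by simp [w], ?_⟩
    · simp [w, Sym2.eq_iff, hxy.ne, hxy.ne', hyz.ne, hyz.ne', hzx.ne, hzx.ne']
    · simp [w, hxy.ne, hxy.ne', hyz.ne, hyz.ne', hzx.ne, hzx.ne']
  have hedges : w.edges = [s(x, y), s(y, z), s(z, x)] := rfl
  have h3 := hNAC.2.2 w hcyc
  cases hcx : δ s(x, y) <;> cases hcy : δ s(y, z) <;> cases hcz : δ s(z, x)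
  · exact ⟨rfl, rfl⟩
  · exact absurd (by simp [hedges, List.countP_cons, hcx, hcy, hcz]) (h3 true)
  · exact absurd (by simp [hedges, List.countP_cons, hcx, hcy, hcz]) (h3 true)
  · exact absurd (by simp [hedges, List.countP_cons, hcx, hcy, hcz]) (h3 false)
  · exact absurd (by simp [hedges, List.countP_cons, hcx, hcy, hcz]) (h3 true)
  · exact absurd (by simp [hedges, List.countP_cons, hcx, hcy, hcz]) (h3 false)
  · exact absurd (by simp [hedges, List.countP_cons, hcx, hcy, hcz]) (h3 false)
  · exact ⟨rfl, rfl⟩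

variable {n : ℕ} {d : ℕ → Bool}

lemma rung_adj {i : ℕ} (hi : i ≤ n) : (bracedLadder n d).Adj (i, false) (i, true) := by
  rw [bracedLadder, SimpleGraph.fromEdgeSet_adj]
  exact ⟨Or.inl (Or.inl ⟨i, hi, rfl⟩), by simp⟩

lemma rail_adj {i : ℕ} (hi : i < n) (b : Bool) :
    (bracedLadder n d).Adj (i, b) (i + 1, b) := by
  rw [bracedLadder, SimpleGraph.fromEdgeSet_adj]
  exact ⟨Or.inl (Or.inr ⟨i, hi, b, rfl⟩), by simp⟩

lemma diagT_adj {i : ℕ} (hi : i < n) (hd : d i = true) :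
    (bracedLadder n d).Adj (i, false) (i + 1, true) := by
  rw [bracedLadder, SimpleGraph.fromEdgeSet_adj]
  exact ⟨Or.inr ⟨i, hi, by simp [hd]⟩, by simp⟩

lemma diagF_adj {i : ℕ} (hi : i < n) (hd : d i = false) :
    (bracedLadder n d).Adj (i, true) (i + 1, false) := by
  rw [bracedLadder, SimpleGraph.fromEdgeSet_adj]
  exact ⟨Or.inr ⟨i, hi, by simp [hd]⟩, by simp⟩

lemma triRel_symm {V : Type*} {G : SimpleGraph V} : Symmetric (triRel G) :=
  fun _ _ ⟨a, b, c, h1, h2, h3, m1, m2⟩ => ⟨a, b, c, h1, h2, h3, m2, m1⟩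

abbrev R (n : ℕ) (d : ℕ → Bool) := Relation.ReflTransGen (triRel (bracedLadder n d))

lemma rung_diag {i : ℕ} (hi : i < n) :
    triRel (bracedLadder n d) s((i, false), (i, true))
      (if d i then s((i, false), (i + 1, true)) else s((i, true), (i + 1, false))) ∧
    triRel (bracedLadder n d)
      (if d i then s((i, false), (i + 1, true)) else s((i, true), (i + 1, false)))
      s((i + 1, false), (i + 1, true)) := by
  cases hd : d i with
  | true =>
    simp only [if_true]
    constructor
    · exact ⟨(i, false), (i, true), (i + 1, true), rung_adj hi.le, rail_adj hi true,
        (diagT_adj hi hd).symm, Or.inl rfl, Or.inr (Or.inr (Sym2.eq_swap.symm))⟩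
    · exact ⟨(i, false), (i + 1, false), (i + 1, true), rail_adj hi false,
        rung_adj hi, (diagT_adj hi hd).symm,
        Or.inr (Or.inr (Sym2.eq_swap.symm)), Or.inr (Or.inl rfl)⟩
  | false =>
    simp only [Bool.false_eq_true, if_false]
    constructor
    · exact ⟨(i, true), (i, false), (i + 1, false), (rung_adj hi.le).symm, rail_adj hi false,
        (diagF_adj hi hd).symm, Or.inl Sym2.eq_swap, Or.inr (Or.inr (Sym2.eq_swap.symm))⟩
    · exact ⟨(i, true), (i + 1, true), (i + 1, false), rail_adj hi true,
        (rung_adj hi).symm, (diagF_adj hi hd).symm,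
        Or.inr (Or.inr (Sym2.eq_swap.symm)), Or.inr (Or.inl Sym2.eq_swap)⟩

lemma rung_chain : ∀ i ≤ n, R n d s((0, false), (0, true)) s((i, false), (i, true)) := by
  intro i
  induction i with
  | zero => intro _; exact Relation.ReflTransGen.refl
  | succ i ih =>
    intro h
    have hi : i < n := h
    exact ((ih hi.le).tail (rung_diag hi).1).tail (rung_diag hi).2

lemma edge_conn : ∀ e ∈ (bracedLadder n d).edgeSet,
    R n d s((0, false), (0, true)) e := by
  intro e he
  rw [bracedLadder, SimpleGraph.edgeSet_fromEdgeSet] at he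
  obtain ⟨hmem, -⟩ := he
  rcases hmem with (⟨i, hi, rfl⟩ | ⟨i, hi, b, rfl⟩) | ⟨i, hi, rfl⟩
  · exact rung_chain i hi
  · cases hd : d i with
    | true =>
      cases b with
      | true =>
        exact (rung_chain i hi.le).tail
          ⟨(i, false), (i, true), (i + 1, true), rung_adj hi.le, rail_adj hi true,
            (diagT_adj hi hd).symm, Or.inl rfl, Or.inr (Or.inl rfl)⟩
      | false =>
        exact (rung_chain (i + 1) hi).tail
          ⟨(i, false), (i + 1, false), (i + 1, true), rail_adj hi false, rung_adj hi,
            (diagT_adj hi hd).symm, Or.inr (Or.inl rfl), Or.inl rfl⟩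
    | false =>
      cases b with
      | false =>
        exact (rung_chain i hi.le).tail
          ⟨(i, true), (i, false), (i + 1, false), (rung_adj hi.le).symm, rail_adj hi false,
            (diagF_adj hi hd).symm, Or.inl Sym2.eq_swap, Or.inr (Or.inl rfl)⟩
      | true =>
        exact (rung_chain (i + 1) hi).tail
          ⟨(i, true), (i + 1, true), (i + 1, false), rail_adj hi true, (rung_adj hi).symm,
            (diagF_adj hi hd).symm, Or.inr (Or.inl Sym2.eq_swap), Or.inl rfl⟩
  · exact (rung_chain i hi.le).tail (rung_diag hi).1

end Helpers

/-- all edges of a braced ladder lie in a single △-connected component;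
consequently, in every NAC-coloring of any graph containing a braced ladder as a
subgraph, all edges of the braced ladder are monochromatic. -/
theorem bracedLadder_monochromatic (n : ℕ) (d : ℕ → Bool) :
    (∀ e₁ ∈ (bracedLadder n d).edgeSet, ∀ e₂ ∈ (bracedLadder n d).edgeSet,
      Relation.ReflTransGen (triRel (bracedLadder n d)) e₁ e₂) ∧
    (∀ {W : Type*} (H : SimpleGraph W) (φ : bracedLadder n d →g H),
      Function.Injective φ → ∀ δ : Sym2 W → Bool, IsNACColoring H δ →
        ∀ e₁ ∈ (bracedLadder n d).edgeSet, ∀ e₂ ∈ (bracedLadder n d).edgeSet,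
          δ (e₁.map φ) = δ (e₂.map φ)) := by
  have part1 : ∀ e₁ ∈ (bracedLadder n d).edgeSet, ∀ e₂ ∈ (bracedLadder n d).edgeSet,
      Relation.ReflTransGen (triRel (bracedLadder n d)) e₁ e₂ := by
    intro e₁ h1 e₂ h2
    exact ((@Relation.ReflTransGen.stdSymm _ _ ⟨fun _ _ h => triRel_symm h⟩).symm _ _ (edge_conn e₁ h1)).trans
      (edge_conn e₂ h2)
  refine ⟨part1, ?_⟩
  intro W H φ hinj δ hNAC e₁ h1 e₂ h2
  have hrel := part1 e₁ h1 e₂ h2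
  clear h2 h1
  induction hrel with
  | refl => rfl
  | tail _ htri ih =>
    obtain ⟨a, b, c, hab, hbc, hca, m1, m2⟩ := htri
    have t := tri_mono H δ hNAC (φ.map_adj hab) (φ.map_adj hbc) (φ.map_adj hca)
    rw [ih]
    rcases m1 with rfl | rfl | rfl <;> rcases m2 with rfl | rfl | rfl <;>
      simp only [Sym2.map_pair_eq] <;>
      first
        | rfl
        | exact t.1
        | exact t.2
        | exact t.1.trans t.2
        | exact t.1.symm
        | exact t.2.symm
        | exact (t.1.trans t.2).symm
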